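/- Let n ≥ 1, w ∈ (0,∞)^n, p, p* ∈ (0,∞)^n, 0 < λ ≤ 1, 0 < α ≤ 1 and β > 0. Let f = max_i max(p_i/p_i*, p_i*/p_i) and suppose f^β ≥ 2. Suppose x ∈ (0,∞)^n satisfies, for every i, w_i · f^β · (f·p_i/p_i*)^{−α} ≤ x_i ≤ w_i · f^{−β} · (f·p_i*/p_i)^{α}. Define p'_i = p_i·(1 + λ·min{1, (x_i − w_i)/w_i}) for each i. Then max_i max(p'_i/p_i*, p_i*/p'_i) ≤ (1 − λ/2)·f. -/

import Mathlib

lemma aux1 (f r α : ℝ) (hf : 0 < f) (hr : 0 < r) (hrf : r ≤ f)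
    (hα0 : 0 ≤ α) (hα1 : α ≤ 1) : r * (f / r) ^ α ≤ f := by
  have h1 : (f / r) ^ α = f ^ α / r ^ α := Real.div_rpow hf.le hr.le α
  have hrα : (0:ℝ) < r ^ α := Real.rpow_pos_of_pos hr α
  have hfα : (0:ℝ) < f ^ α := Real.rpow_pos_of_pos hf α
  have h2 : r * (f / r) ^ α = f ^ α * r ^ (1 - α) := by
    rw [h1, Real.rpow_sub hr, Real.rpow_one]
    field_simp
  rw [h2]
  calc f ^ α * r ^ (1 - α) ≤ f ^ α * f ^ (1 - α) :=
        mul_le_mul_of_nonneg_left (Real.rpow_le_rpow hr.le hrf (by linarith)) hfα.le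
    _ = f := by rw [← Real.rpow_add hf]; simp

lemma aux2 (f r α : ℝ) (hf : 0 < f) (hr : 0 < r) (hrf : 1 / f ≤ r)
    (hα0 : 0 ≤ α) (hα1 : α ≤ 1) : 1 / f ≤ r * (f * r) ^ (-α) := by
  have h1 : (f * r) ^ (-α) = (f ^ α)⁻¹ * (r ^ α)⁻¹ := by
    rw [Real.rpow_neg (by positivity), Real.mul_rpow hf.le hr.le, mul_inv]
  have hrα : (0:ℝ) < r ^ α := Real.rpow_pos_of_pos hr α
  have hfα : (0:ℝ) < f ^ α := Real.rpow_pos_of_pos hf α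
  have h2 : r * (f * r) ^ (-α) = r ^ (1 - α) / f ^ α := by
    rw [h1, Real.rpow_sub hr, Real.rpow_one]
    field_simp
  rw [h2]
  have h3 : (1 / f) ^ (1 - α) ≤ r ^ (1 - α) :=
    Real.rpow_le_rpow (by positivity) hrf (by linarith)
  have h4 : (1 / f) ^ (1 - α) / f ^ α = 1 / f := by
    rw [one_div, ← Real.rpow_neg_one f, ← Real.rpow_mul hf.le, ← Real.rpow_sub hf]
    ring_nf
  calc 1 / f = (1 / f) ^ (1 - α) / f ^ α := h4.symm
    _ ≤ r ^ (1 - α) / f ^ α := by gcongr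


/-- Lemma 4, part 1 (one-time market, far-from-equilibrium regime):
if `f^β ≥ 2` and the demands satisfy the `f`-bounded demand bounds for a
market of complements, then one round of tatonnement updates reduces the
price imbalance to at most `(1 − λ/2)·f`. -/
theorem stmt10 (n : ℕ) (hn : 0 < n)
    (w p pstar : Fin n → ℝ)
    (hw : ∀ i, 0 < w i) (hp : ∀ i, 0 < p i) (hpstar : ∀ i, 0 < pstar i)
    (lam α β : ℝ) (hlam0 : 0 < lam) (hlam1 : lam ≤ 1)
    (hα0 : 0 < α) (hα1 : α ≤ 1) (hβ : 0 < β)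
    (f : ℝ)
    (hf : f = Finset.univ.sup'
      (Finset.univ_nonempty_iff.mpr (Fin.pos_iff_nonempty.mp hn))
      (fun i => max (p i / pstar i) (pstar i / p i)))
    (hf2 : 2 ≤ f ^ β)
    (x : Fin n → ℝ) (hx : ∀ i, 0 < x i)
    (hxlb : ∀ i, w i * f ^ β * (f * p i / pstar i) ^ (-α) ≤ x i)
    (hxub : ∀ i, x i ≤ w i * f ^ (-β) * (f * pstar i / p i) ^ α)
    (p' : Fin n → ℝ)
    (hp' : ∀ i, p' i = p i * (1 + lam * min 1 ((x i - w i) / w i))) :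
    Finset.univ.sup'
      (Finset.univ_nonempty_iff.mpr (Fin.pos_iff_nonempty.mp hn))
      (fun i => max (p' i / pstar i) (pstar i / p' i)) ≤ (1 - lam / 2) * f := by
  have hne := Finset.univ_nonempty_iff.mpr (Fin.pos_iff_nonempty.mp hn)
  -- f bounds each ratio
  have hub : ∀ i, p i / pstar i ≤ f := by
    intro i; rw [hf]
    exact le_trans (le_max_left _ _)
      (Finset.le_sup' (fun j => max (p j / pstar j) (pstar j / p j)) (Finset.mem_univ i))
  have hlb : ∀ i, pstar i / p i ≤ f := by
    intro i; rw [hf]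
    exact le_trans (le_max_right _ _)
      (Finset.le_sup' (fun j => max (p j / pstar j) (pstar j / p j)) (Finset.mem_univ i))
  have i0 : Fin n := ⟨0, hn⟩
  have hfpos : 0 < f := lt_of_lt_of_le (div_pos (hp i0) (hpstar i0)) (hub i0)
  have hf1 : 1 ≤ f := by
    by_contra h
    push_neg at h
    have : f ^ β ≤ 1 ^ β := Real.rpow_le_rpow hfpos.le h.le hβ.le
    rw [Real.one_rpow] at this
    linarith
  have hfβpos : 0 < f ^ β := Real.rpow_pos_of_pos hfpos β
  have hfnegβ : f ^ (-β) ≤ 1 / 2 := by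
    rw [Real.rpow_neg hfpos.le]
    rw [inv_le_comm₀ (Real.rpow_pos_of_pos hfpos β) (by norm_num)]
    calc (1/2 : ℝ)⁻¹ = 2 := by norm_num
      _ ≤ f ^ β := hf2
  apply Finset.sup'_le
  intro i _
  have hwi := hw i; have hpi := hp i; have hpsi := hpstar i
  set r := p i / pstar i with hr
  have hrpos : 0 < r := by positivity
  have hrlb : 1 / f ≤ r := by
    rw [div_le_iff₀ hfpos, hr, div_mul_eq_mul_div, le_div_iff₀ hpsi]
    have := hlb i
    rw [div_le_iff₀ hpi] at this
    linarith
  have hpub : p i ≤ f * pstar i := by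
    have := hub i; rw [div_le_iff₀ hpsi] at this; linarith
  have hplb : pstar i / f ≤ p i := by
    have := hlb i; rw [div_le_iff₀ hpi] at this
    rw [div_le_iff₀ hfpos]; linarith
  -- upper bound part
  have hA : p i * (f * pstar i / p i) ^ α ≤ f * pstar i := by
    have h1 : f * pstar i / p i = f / r := by rw [hr]; field_simp
    have h2 := aux1 f r α hfpos hrpos (hub i) hα0.le hα1
    calc p i * (f * pstar i / p i) ^ α = pstar i * (r * (f / r) ^ α) := by
          rw [h1, hr]; field_simp
      _ ≤ pstar i * f := by exact mul_le_mul_of_nonneg_left h2 hpsi.le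
      _ = f * pstar i := mul_comm _ _
  have hpx : p i * (x i / w i) ≤ (f / 2) * pstar i := by
    have h1 : x i / w i ≤ f ^ (-β) * (f * pstar i / p i) ^ α := by
      rw [div_le_iff₀ hwi]
      calc x i ≤ w i * f ^ (-β) * (f * pstar i / p i) ^ α := hxub i
        _ = f ^ (-β) * (f * pstar i / p i) ^ α * w i := by ring
    have hpow : (0:ℝ) < (f * pstar i / p i) ^ α := Real.rpow_pos_of_pos (by positivity) α
    calc p i * (x i / w i) ≤ p i * (f ^ (-β) * (f * pstar i / p i) ^ α) :=
          mul_le_mul_of_nonneg_left h1 hpi.le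
      _ = f ^ (-β) * (p i * (f * pstar i / p i) ^ α) := by ring
      _ ≤ (1/2) * (f * pstar i) := by
          apply mul_le_mul hfnegβ hA (by positivity) (by norm_num)
      _ = (f / 2) * pstar i := by ring
  have hmt : min 1 ((x i - w i) / w i) ≤ (x i - w i) / w i := min_le_right _ _
  have hupper : p' i / pstar i ≤ (1 - lam / 2) * f := by
    rw [div_le_iff₀ hpsi]
    have h1 : p' i ≤ (1 - lam) * p i + lam * (p i * (x i / w i)) := by
      rw [hp' i]
      have : p i * (1 + lam * ((x i - w i) / w i)) =
          (1 - lam) * p i + lam * (p i * (x i / w i)) := by field_simp; ring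
      calc p i * (1 + lam * min 1 ((x i - w i) / w i)) ≤
            p i * (1 + lam * ((x i - w i) / w i)) := by
            apply mul_le_mul_of_nonneg_left _ hpi.le
            have := mul_le_mul_of_nonneg_left hmt hlam0.le
            linarith
        _ = _ := this
    calc p' i ≤ (1 - lam) * p i + lam * (p i * (x i / w i)) := h1
      _ ≤ (1 - lam) * (f * pstar i) + lam * ((f / 2) * pstar i) := by
          apply add_le_add
          · apply mul_le_mul_of_nonneg_left hpub (by linarith)
          · exact mul_le_mul_of_nonneg_left hpx hlam0.le
      _ = (1 - lam / 2) * f * pstar i := by ring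
  -- lower bound part
  have hB : pstar i / f ≤ p i * (f * p i / pstar i) ^ (-α) := by
    have h1 : f * p i / pstar i = f * r := by rw [hr]; field_simp
    have h2 := aux2 f r α hfpos hrpos hrlb hα0.le hα1
    calc pstar i / f = pstar i * (1 / f) := by ring
      _ ≤ pstar i * (r * (f * r) ^ (-α)) := mul_le_mul_of_nonneg_left h2 hpsi.le
      _ = p i * (f * p i / pstar i) ^ (-α) := by rw [h1, hr]; field_simp
  set s := f ^ β * (f * p i / pstar i) ^ (-α) with hs
  have hspos : 0 < s := by positivity
  have hts : s - 1 ≤ (x i - w i) / w i := by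
    rw [le_div_iff₀ hwi]
    have h := hxlb i
    have e : w i * s = w i * f ^ β * (f * p i / pstar i) ^ (-α) := by rw [hs]; ring
    have : w i * s ≤ x i := by rw [e]; exact h
    linarith
  have hps : 2 * (pstar i / f) ≤ p i * s := by
    have h1 : f ^ β * (pstar i / f) ≤ f ^ β * (p i * (f * p i / pstar i) ^ (-α)) :=
      mul_le_mul_of_nonneg_left hB hfβpos.le
    have h2 : 2 * (pstar i / f) ≤ f ^ β * (pstar i / f) := by
      apply mul_le_mul_of_nonneg_right hf2 (by positivity)
    calc 2 * (pstar i / f) ≤ f ^ β * (pstar i / f) := h2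
      _ ≤ f ^ β * (p i * (f * p i / pstar i) ^ (-α)) := h1
      _ = p i * s := by rw [hs]; ring
  have hp'lb : (1 + lam) * (pstar i / f) ≤ p' i := by
    rcases le_or_gt (s - 1) 1 with hc | hc
    · have hm : s - 1 ≤ min 1 ((x i - w i) / w i) := le_min hc hts
      have : p i * (1 + lam * (s - 1)) ≤ p' i := by
        rw [hp' i]
        apply mul_le_mul_of_nonneg_left _ hpi.le
        have := mul_le_mul_of_nonneg_left hm hlam0.le
        linarith
      have key : (1 + lam) * (pstar i / f) ≤ p i * (1 + lam * (s - 1)) := by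
        have e : p i * (1 + lam * (s - 1)) = (1 - lam) * p i + lam * (p i * s) := by ring
        rw [e]
        calc (1 + lam) * (pstar i / f)
            = (1 - lam) * (pstar i / f) + lam * (2 * (pstar i / f)) := by ring
          _ ≤ (1 - lam) * p i + lam * (p i * s) := by
              apply add_le_add
              · exact mul_le_mul_of_nonneg_left hplb (by linarith)
              · exact mul_le_mul_of_nonneg_left hps hlam0.le
      linarith
    · have hm : (1:ℝ) ≤ min 1 ((x i - w i) / w i) := le_min le_rfl (by linarith)
      have : p i * (1 + lam) ≤ p' i := by
        rw [hp' i]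
        apply mul_le_mul_of_nonneg_left _ hpi.le
        have := mul_le_mul_of_nonneg_left hm hlam0.le
        linarith
      have : (1 + lam) * (pstar i / f) ≤ p i * (1 + lam) := by
        rw [mul_comm (p i)]
        exact mul_le_mul_of_nonneg_left hplb (by linarith)
      linarith
  have hp'pos : 0 < p' i := lt_of_lt_of_le (by positivity) hp'lb
  have hlower : pstar i / p' i ≤ (1 - lam / 2) * f := by
    rw [div_le_iff₀ hp'pos]
    calc pstar i = 1 * pstar i := (one_mul _).symm
      _ ≤ ((1 - lam / 2) * (1 + lam)) * pstar i := by
          apply mul_le_mul_of_nonneg_right _ hpsi.le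
          nlinarith
      _ = (1 - lam / 2) * f * ((1 + lam) * (pstar i / f)) := by field_simp
      _ ≤ (1 - lam / 2) * f * p' i := by
          apply mul_le_mul_of_nonneg_left hp'lb
          nlinarith
  exact max_le hupper hlower
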